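/- arXiv:1308.5187 — 3 statements merged into one kernel-verified Lean document; each statement's English description precedes it below -/
import Mathlib

section
/- Let Δ ⊂ G_{2m} be an open bounded set with (cl(Δ) − cl(Δ)) ∩ S = {0}, and let Δ₁,…,Δ_n ⊂ H_m be compact, pairwise disjoint sets with Δ₁+⋯+Δ_n ⊂ Δ. Then there exist pairwise disjoint open sets O₁,…,O_n ⊂ ℝ^{1+d} with Δ_i ⊂ O_i such that for all compact sets K₁,…,K_n ⊂ ℝ^{1+d} satisfying −K_i ⊂ O_i and (−K_i) ∩ S ⊂ Δ_i for each i, one has: (a) (cl(Δ) + K₁ + ⋯ + K_n) ∩ S ⊂ {0}; (b) −(K₁ + ⋯ + K_n) ⊂ Δ; (c) (Δ_i + K_i) ∩ S ⊂ {0} for each i. -/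
noncomputable section

open Set Filter
open scoped Pointwise

/-- Spacetime `ℝ^{1+d}`, with points `(E, p)`. -/
abbrev SpaceTime (d : ℕ) := ℝ × EuclideanSpace ℝ (Fin d)

/-- The mass hyperboloid `H_m`. -/
def massHyp (d : ℕ) (m : ℝ) : Set (SpaceTime d) :=
  {q | q.1 = Real.sqrt (‖q.2‖ ^ 2 + m ^ 2)}

/-- The region `G_{2m}`. -/
def Gmass (d : ℕ) (m : ℝ) : Set (SpaceTime d) :=
  {q | Real.sqrt (‖q.2‖ ^ 2 + 4 * m ^ 2) ≤ q.1}

/-- The set `S = {0} ∪ H_m ∪ G_{2m}`. -/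
def specSet (d : ℕ) (m : ℝ) : Set (SpaceTime d) :=
  {0} ∪ massHyp d m ∪ Gmass d m

section Helpers

variable {V : Type*} [NormedAddCommGroup V]

lemma add_ball_subset_thickening (A : Set V) {ε δ : ℝ} (h : ε ≤ δ) :
    A + Metric.ball 0 ε ⊆ Metric.thickening δ A := by
  rintro x ⟨a, ha, b, hb, rfl⟩
  rw [Metric.mem_thickening_iff]
  refine ⟨a, ha, ?_⟩
  have : dist (a + b) a = ‖b‖ := by
    simp [dist_eq_norm]
  rw [this]
  exact lt_of_lt_of_le (by simpa using hb) h

lemma sum_ball_subset [NormedSpace ℝ V] {ε : ℝ} (hε : 0 < ε) :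
    ∀ k : ℕ, (∑ _i : Fin (k + 1), Metric.ball (0 : V) ε) ⊆
      Metric.ball 0 ((k + 1 : ℕ) * ε) := by
  intro k
  induction k with
  | zero => simp [Fin.sum_univ_one]
  | succ k ih =>
    rw [Fin.sum_univ_succ]
    have h1 : (Metric.ball (0 : V) ε) + (∑ _i : Fin (k + 1), Metric.ball (0 : V) ε) ⊆
        Metric.ball (0 : V) ε + Metric.ball 0 ((k + 1 : ℕ) * ε) :=
      Set.add_subset_add_left ih
    refine h1.trans ?_
    have hk : (0 : ℝ) < (k + 1 : ℕ) * ε := by positivity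
    rw [ball_add_ball hε hk]
    apply Metric.ball_subset_ball'
    simp only [add_zero, dist_self]
    push_cast
    ring_nf
    nlinarith [hε]

lemma isCompact_finset_sum {ι : Type*} (s : Finset ι) (A : ι → Set V)
    (h : ∀ i, IsCompact (A i)) : IsCompact (∑ i ∈ s, A i) := by
  classical
  induction s using Finset.cons_induction with
  | empty => rw [Finset.sum_empty]; exact isCompact_singleton
  | cons i s hi ih => rw [Finset.sum_cons]; exact (h i).add ih

lemma neg_finset_sum {ι : Type*} (s : Finset ι) (A : ι → Set V) :
    -(∑ i ∈ s, A i) = ∑ i ∈ s, -(A i) := by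
  classical
  induction s using Finset.cons_induction with
  | empty => simp
  | cons i s hi ih => rw [Finset.sum_cons, Finset.sum_cons, ← ih, neg_add]

lemma finset_sum_subset {ι : Type*} (s : Finset ι) (A B : ι → Set V)
    (h : ∀ i, A i ⊆ B i) : (∑ i ∈ s, A i) ⊆ ∑ i ∈ s, B i := by
  classical
  induction s using Finset.cons_induction with
  | empty => simp
  | cons i s hi ih => rw [Finset.sum_cons, Finset.sum_cons]; exact Set.add_subset_add (h i) ih

end Helpers

/-- Key Minkowski-geometry inequality: the difference of two points on the mass-`m`
hyperboloid has "invariant mass squared" strictly below `m²`. -/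
lemma hyp_sub_core {d : ℕ} {m : ℝ} (hm : 0 < m) {p q : SpaceTime d}
    (hp : p ∈ massHyp d m) (hq : q ∈ massHyp d m) :
    (p.1 - q.1) ^ 2 < ‖p.2 - q.2‖ ^ 2 + m ^ 2 := by
  have hp1 : p.1 = Real.sqrt (‖p.2‖ ^ 2 + m ^ 2) := hp
  have hq1 : q.1 = Real.sqrt (‖q.2‖ ^ 2 + m ^ 2) := hq
  set a := ‖p.2‖ with ha_def
  set b := ‖q.2‖ with hb_def
  have ha : 0 ≤ a := norm_nonneg _
  have hb : 0 ≤ b := norm_nonneg _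
  have hp2 : p.1 ^ 2 = a ^ 2 + m ^ 2 := by
    rw [hp1]; exact Real.sq_sqrt (by positivity)
  have hq2 : q.1 ^ 2 = b ^ 2 + m ^ 2 := by
    rw [hq1]; exact Real.sq_sqrt (by positivity)
  have hp0 : 0 ≤ p.1 := hp1 ▸ Real.sqrt_nonneg _
  have hq0 : 0 ≤ q.1 := hq1 ▸ Real.sqrt_nonneg _
  have hip : inner ℝ p.2 q.2 ≤ a * b := real_inner_le_norm p.2 q.2
  have hns : ‖p.2 - q.2‖ ^ 2 = a ^ 2 - 2 * inner ℝ p.2 q.2 + b ^ 2 := by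
    rw [ha_def, hb_def]
    exact norm_sub_sq_real p.2 q.2
  have hs0 : 0 ≤ p.1 * q.1 := mul_nonneg hp0 hq0
  have hs2 : (p.1 * q.1) ^ 2 = (a ^ 2 + m ^ 2) * (b ^ 2 + m ^ 2) := by
    rw [mul_pow, hp2, hq2]
  have key : m ^ 2 + 2 * (a * b) < 2 * (p.1 * q.1) := by
    nlinarith [sq_nonneg (a - b), sq_nonneg (a + b), mul_nonneg ha hb, sq_nonneg m,
      mul_pos hm hm, sq_nonneg (2 * (p.1 * q.1) + m ^ 2 + 2 * (a * b))]
  nlinarith [key, hip, hp2, hq2, hns]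

theorem statement6 (m : ℝ) (hm : 0 < m) (d : ℕ) (hd : 1 ≤ d) (n : ℕ) (hn : 1 ≤ n)
    (Δ : Set (SpaceTime d)) (hΔopen : IsOpen Δ) (hΔbd : Bornology.IsBounded Δ)
    (hΔG : Δ ⊆ Gmass d m)
    (hΔspec : (closure Δ - closure Δ) ∩ specSet d m = {0})
    (Δi : Fin n → Set (SpaceTime d))
    (hΔiH : ∀ i, Δi i ⊆ massHyp d m) (hΔic : ∀ i, IsCompact (Δi i))
    (hΔidisj : ∀ i j, i ≠ j → Disjoint (Δi i) (Δi j))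
    (hΔisum : (∑ i : Fin n, Δi i) ⊆ Δ) :
    ∃ O : Fin n → Set (SpaceTime d),
      (∀ i, IsOpen (O i)) ∧ (∀ i, Δi i ⊆ O i) ∧
      (∀ i j, i ≠ j → Disjoint (O i) (O j)) ∧
      ∀ K : Fin n → Set (SpaceTime d),
        (∀ i, IsCompact (K i)) → (∀ i, -K i ⊆ O i) →
        (∀ i, (-K i) ∩ specSet d m ⊆ Δi i) →
        (closure Δ + ∑ i : Fin n, K i) ∩ specSet d m ⊆ {0} ∧
        -(∑ i : Fin n, K i) ⊆ Δ ∧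
        ∀ i, (Δi i + K i) ∩ specSet d m ⊆ {0} := by
  classical
  haveI : NeZero n := ⟨by omega⟩
  -- The closed set T = H_m ∪ G_{2m}
  set T : Set (SpaceTime d) := massHyp d m ∪ Gmass d m with hT_def
  have hTc : IsClosed T := by
    apply IsClosed.union
    · exact isClosed_eq continuous_fst
        ((Real.continuous_sqrt).comp (by fun_prop))
    · exact isClosed_le ((Real.continuous_sqrt).comp (by fun_prop)) continuous_fst
  -- Δi i - Δi i is disjoint from T
  have hdisjT : ∀ i, Disjoint (Δi i - Δi i) T := by
    intro i
    rw [Set.disjoint_left]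
    rintro x ⟨p, hp, q, hq, rfl⟩ hxT
    have core := hyp_sub_core hm (hΔiH i hp) (hΔiH i hq)
    have hx1 : (p - q).1 = p.1 - q.1 := rfl
    have hx2 : (p - q).2 = p.2 - q.2 := rfl
    rcases hxT with hH | hG
    · have h1 : (p - q).1 = Real.sqrt (‖(p - q).2‖ ^ 2 + m ^ 2) := hH
      have h2 : (p.1 - q.1) ^ 2 = ‖p.2 - q.2‖ ^ 2 + m ^ 2 := by
        rw [← hx1, ← hx2, h1]
        exact Real.sq_sqrt (by positivity)
      linarith [core, h2]
    · have h1 : Real.sqrt (‖(p - q).2‖ ^ 2 + 4 * m ^ 2) ≤ (p - q).1 := hG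
      have h0 : 0 ≤ (p - q).1 := le_trans (Real.sqrt_nonneg _) h1
      have h2 : ‖(p - q).2‖ ^ 2 + 4 * m ^ 2 ≤ (p - q).1 ^ 2 := by
        have := Real.sq_sqrt (show (0:ℝ) ≤ ‖(p - q).2‖ ^ 2 + 4 * m ^ 2 by positivity)
        nlinarith [Real.sqrt_nonneg (‖(p - q).2‖ ^ 2 + 4 * m ^ 2)]
      rw [hx1, hx2] at h2
      nlinarith [core, h2, sq_nonneg m]
  -- choose thickening radii separating (Δi i - Δi i) from T
  have hδ1ex : ∀ i, ∃ δ, 0 < δ ∧ Disjoint (Metric.thickening δ (Δi i - Δi i)) T := by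
    intro i
    have hc : IsCompact (Δi i - Δi i) := by
      rw [sub_eq_add_neg]
      exact (hΔic i).add (hΔic i).neg
    obtain ⟨δ, hδ, hdisj⟩ := (hdisjT i).exists_thickenings hc hTc
    exact ⟨δ, hδ, hdisj.mono_right (Metric.self_subset_thickening hδ T)⟩
  choose δ1 hδ1pos hδ1 using hδ1ex
  -- choose thickening radii separating the Δi pairwise
  have hδ2ex : ∀ ij : Fin n × Fin n, ∃ δ, 0 < δ ∧ (ij.1 ≠ ij.2 →
      Disjoint (Metric.thickening δ (Δi ij.1)) (Metric.thickening δ (Δi ij.2))) := by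
    intro ij
    by_cases h : ij.1 = ij.2
    · exact ⟨1, one_pos, fun hne => absurd h hne⟩
    · obtain ⟨δ, hδ, hdisj⟩ := (hΔidisj _ _ h).exists_thickenings (hΔic _) (hΔic _).isClosed
      exact ⟨δ, hδ, fun _ => hdisj⟩
  choose δ2 hδ2pos hδ2 using hδ2ex
  -- a thickening of the total sum inside Δ
  have hSc : IsCompact (∑ i : Fin n, Δi i) := isCompact_finset_sum _ _ hΔic
  obtain ⟨δ0, hδ0pos, hδ0⟩ := hSc.exists_thickening_subset_open hΔopen hΔisum
  -- the common radius ε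
  have hne1 : (Finset.univ : Finset (Fin n)).Nonempty := Finset.univ_nonempty
  have hne2 : (Finset.univ : Finset (Fin n × Fin n)).Nonempty := Finset.univ_nonempty
  set ε : ℝ := min (δ0 / n) (min (Finset.univ.inf' hne1 δ1) (Finset.univ.inf' hne2 δ2))
    with hε_def
  have hnpos : (0 : ℝ) < n := by exact_mod_cast NeZero.pos n
  have hεpos : 0 < ε := by
    refine lt_min (div_pos hδ0pos hnpos) (lt_min ?_ ?_)
    · exact (Finset.lt_inf'_iff _).mpr fun i _ => hδ1pos i
    · exact (Finset.lt_inf'_iff _).mpr fun ij _ => hδ2pos ij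
  have hε1 : ∀ i, ε ≤ δ1 i := fun i =>
    le_trans (min_le_right _ _) (le_trans (min_le_left _ _) (Finset.inf'_le _ (Finset.mem_univ i)))
  have hε2 : ∀ ij, ε ≤ δ2 ij := fun ij =>
    le_trans (min_le_right _ _) (le_trans (min_le_right _ _) (Finset.inf'_le _ (Finset.mem_univ ij)))
  have hεn : (n : ℝ) * ε ≤ δ0 := by
    have := min_le_left (δ0 / n) (min (Finset.univ.inf' hne1 δ1) (Finset.univ.inf' hne2 δ2))
    rw [← hε_def] at this
    calc (n : ℝ) * ε ≤ (n : ℝ) * (δ0 / n) := by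
          exact mul_le_mul_of_nonneg_left this (le_of_lt hnpos)
      _ = δ0 := by field_simp
  -- the open sets
  refine ⟨fun i => Δi i + Metric.ball 0 ε, ?_, ?_, ?_, ?_⟩
  · intro i
    exact Metric.isOpen_ball.add_left
  · intro i x hx
    exact ⟨x, hx, 0, by simpa using hεpos, add_zero x⟩
  · intro i j hij
    have h1 : Δi i + Metric.ball 0 ε ⊆ Metric.thickening (δ2 (i, j)) (Δi i) :=
      add_ball_subset_thickening _ (hε2 (i, j))
    have h2 : Δi j + Metric.ball 0 ε ⊆ Metric.thickening (δ2 (i, j)) (Δi j) :=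
      add_ball_subset_thickening _ (hε2 (i, j))
    exact ((hδ2 (i, j) hij).mono h1 h2)
  · intro K hKc hKO hKS
    -- K i ⊆ -(Δi i) + ball 0 ε
    have hKsub : ∀ i, K i ⊆ -(Δi i) + Metric.ball 0 ε := by
      intro i x hx
      have h1 : -x ∈ Δi i + Metric.ball 0 ε := hKO i (by simpa using hx)
      obtain ⟨a, ha, b, hb, hab⟩ := h1
      refine ⟨-a, by simpa using ha, -b, ?_, ?_⟩
      · simpa using hb
      · show -a + -b = x
        have hab' : a + b = -x := hab
        rw [← neg_add, hab', neg_neg]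
    -- (b) : -(∑ K i) ⊆ Δ
    have hb : -(∑ i : Fin n, K i) ⊆ Δ := by
      rw [neg_finset_sum]
      have h1 : (∑ i : Fin n, -(K i)) ⊆ ∑ i : Fin n, (Δi i + Metric.ball 0 ε) :=
        finset_sum_subset _ _ _ fun i => hKO i
      refine h1.trans ?_
      rw [Finset.sum_add_distrib]
      obtain ⟨k, rfl⟩ : ∃ k, n = k + 1 := ⟨n - 1, (Nat.succ_pred_eq_of_pos hn).symm⟩
      have h2 : (∑ _i : Fin (k + 1), Metric.ball (0 : SpaceTime d) ε) ⊆
          Metric.ball 0 ((k + 1 : ℕ) * ε) := sum_ball_subset hεpos k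
      refine (Set.add_subset_add_left h2).trans ?_
      refine (add_ball_subset_thickening _ hεn).trans hδ0
    refine ⟨?_, hb, ?_⟩
    -- (a)
    · rintro x ⟨hx1, hxS⟩
      obtain ⟨u, hu, v, hv, rfl⟩ := hx1
      have hv' : -v ∈ Δ := hb (by simpa using hv)
      have hmem : u + v ∈ (closure Δ - closure Δ) ∩ specSet d m := by
        refine ⟨⟨u, hu, -v, subset_closure hv', by show u - -v = u + v; rw [sub_neg_eq_add]⟩, hxS⟩
      rw [hΔspec] at hmem
      exact hmem
    -- (c)
    · intro i
      rintro x ⟨hx1, hxS⟩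
      have hsub : Δi i + K i ⊆ Metric.thickening (δ1 i) (Δi i - Δi i) := by
        have h1 : Δi i + K i ⊆ Δi i + (-(Δi i) + Metric.ball 0 ε) :=
          Set.add_subset_add_left (hKsub i)
        have h2 : Δi i + (-(Δi i) + Metric.ball 0 ε) =
            (Δi i - Δi i) + Metric.ball 0 ε := by
          rw [sub_eq_add_neg, add_assoc]
        refine h1.trans ?_
        rw [h2]
        exact add_ball_subset_thickening _ (hε1 i)
      have hxthick := hsub hx1
      rcases hxS with (h0 | hH) | hG
      · exact h0
      · exact absurd hH (Set.disjoint_left.mp (hδ1 i) hxthick ∘ Or.inl)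
      · exact absurd hG (Set.disjoint_left.mp (hδ1 i) hxthick ∘ Or.inr)
end
end

section
/- Suppose sup_{t≥0} ‖M(t)‖ < ∞ and the functions t ↦ ‖M(t)r(t)‖ and t ↦ ‖M(t)* r(t)‖ are integrable on [0,∞). Suppose there are strongly continuous maps C₁,…,C_n : [0,∞) → B(ℋ) such that |⟨u₁, DM(t) u₂⟩| ≤ Σ_{j=1}^n ‖C_j(t)u₁‖ ‖C_j(t)u₂‖ for all u₁, u₂ ∈ ℋ and t ≥ 0, and ∫_0^∞ ‖C_j(t)u(t)‖² dt < ∞ for each j. Then lim_{t→∞} ⟨u(t), M(t) u(t)⟩ exists. -/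
noncomputable section

open MeasureTheory Set Filter

open Asymptotics

set_option linter.unusedSectionVars false

section Helpers
variable {ℋ : Type*} [NormedAddCommGroup ℋ] [InnerProductSpace ℂ ℋ] [CompleteSpace ℋ]

/-- strong continuity + local bound ⇒ continuity of s ↦ N s (v s) -/
lemma strongContOn (N : ℝ → (ℋ →L[ℂ] ℋ)) (S : Set ℝ) (v : ℝ → ℋ)
    (hN : ∀ x : ℋ, ContinuousOn (fun s => N s x) S)
    (hNb : ∀ t ∈ S, ∃ K : ℝ, ∀ᶠ s in nhdsWithin t S, ‖N s‖ ≤ K)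
    (hv : ContinuousOn v S) :
    ContinuousOn (fun s => N s (v s)) S := by
  intro t ht
  obtain ⟨K, hK⟩ := hNb t ht
  have hvt : Tendsto v (nhdsWithin t S) (nhds (v t)) := hv t ht
  have h1 : Tendsto (fun s => N s (v s - v t)) (nhdsWithin t S) (nhds 0) := by
    apply squeeze_zero_norm' (a := fun s => (max K 0) * ‖v s - v t‖)
    · filter_upwards [hK] with s hs
      calc ‖N s (v s - v t)‖ ≤ ‖N s‖ * ‖v s - v t‖ := (N s).le_opNorm _
        _ ≤ (max K 0) * ‖v s - v t‖ :=
          mul_le_mul_of_nonneg_right (le_trans hs (le_max_left _ _)) (norm_nonneg _)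
    · have h0 : Tendsto (fun s => v s - v t) (nhdsWithin t S) (nhds (v t - v t)) :=
        hvt.sub tendsto_const_nhds
      have := (h0.norm).const_mul (max K 0)
      simpa using this
  have h2 : Tendsto (fun s => N s (v t)) (nhdsWithin t S) (nhds (N t (v t))) := hN (v t) t ht
  have := h1.add h2
  rw [zero_add] at this
  apply this.congr
  intro s
  simp [map_sub]

set_option linter.unusedSectionVars false

/-- weak continuity + local bound + continuous paths ⇒ continuity of pairing -/
lemma pairContOn (N : ℝ → (ℋ →L[ℂ] ℋ)) (S : Set ℝ) (v w : ℝ → ℋ)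
    (hNw : ∀ x y : ℋ, ContinuousOn (fun s => (inner ℂ x (N s y) : ℂ)) S)
    (hNb : ∀ t ∈ S, ∃ K : ℝ, ∀ᶠ s in nhdsWithin t S, ‖N s‖ ≤ K)
    (hv : ContinuousOn v S) (hw : ContinuousOn w S) :
    ContinuousOn (fun s => (inner ℂ (v s) (N s (w s)) : ℂ)) S := by
  intro t ht
  obtain ⟨K, hK⟩ := hNb t ht
  set K' := max K 0 with hK'
  have hK'0 : 0 ≤ K' := le_max_right _ _
  have hKK' : ∀ᶠ s in nhdsWithin t S, ‖N s‖ ≤ K' := by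
    filter_upwards [hK] with s hs; exact le_trans hs (le_max_left _ _)
  have hvt : Tendsto v (nhdsWithin t S) (nhds (v t)) := hv t ht
  have hwt : Tendsto w (nhdsWithin t S) (nhds (w t)) := hw t ht
  have h1 : Tendsto (fun s => (inner ℂ (v s - v t) (N s (w s)) : ℂ))
      (nhdsWithin t S) (nhds 0) := by
    apply squeeze_zero_norm' (a := fun s => ‖v s - v t‖ * (K' * ‖w s‖))
    · filter_upwards [hKK'] with s hs
      calc ‖(inner ℂ (v s - v t) (N s (w s)) : ℂ)‖ ≤ ‖v s - v t‖ * ‖N s (w s)‖ :=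
            norm_inner_le_norm _ _
        _ ≤ ‖v s - v t‖ * (K' * ‖w s‖) := by
            apply mul_le_mul_of_nonneg_left _ (norm_nonneg _)
            exact le_trans ((N s).le_opNorm _)
              (mul_le_mul_of_nonneg_right hs (norm_nonneg _))
    · have h0 : Tendsto (fun s => ‖v s - v t‖ * (K' * ‖w s‖)) (nhdsWithin t S)
          (nhds (‖v t - v t‖ * (K' * ‖w t‖))) :=
        ((hvt.sub tendsto_const_nhds).norm).mul ((hwt.norm).const_mul K')
      simpa using h0
  have h2 : Tendsto (fun s => (inner ℂ (v t) (N s (w s - w t)) : ℂ))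
      (nhdsWithin t S) (nhds 0) := by
    apply squeeze_zero_norm' (a := fun s => ‖v t‖ * (K' * ‖w s - w t‖))
    · filter_upwards [hKK'] with s hs
      calc ‖(inner ℂ (v t) (N s (w s - w t)) : ℂ)‖ ≤ ‖v t‖ * ‖N s (w s - w t)‖ :=
            norm_inner_le_norm _ _
        _ ≤ ‖v t‖ * (K' * ‖w s - w t‖) := by
            apply mul_le_mul_of_nonneg_left _ (norm_nonneg _)
            exact le_trans ((N s).le_opNorm _)
              (mul_le_mul_of_nonneg_right hs (norm_nonneg _))
    · have h0 : Tendsto (fun s => ‖v t‖ * (K' * ‖w s - w t‖)) (nhdsWithin t S)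
          (nhds (‖v t‖ * (K' * ‖w t - w t‖))) :=
        tendsto_const_nhds.mul (((hwt.sub tendsto_const_nhds).norm).const_mul K')
      simpa using h0
  have h3 : Tendsto (fun s => (inner ℂ (v t) (N s (w t)) : ℂ))
      (nhdsWithin t S) (nhds (inner ℂ (v t) (N t (w t)))) := hNw (v t) (w t) t ht
  have hsum := (h1.add h2).add h3
  rw [zero_add, zero_add] at hsum
  apply hsum.congr
  intro s
  simp only [map_sub, inner_sub_left, inner_sub_right]
  ring

/-- extend weak continuity from a dense set using a uniform bound -/
lemma weakContOn_ext (N : ℝ → (ℋ →L[ℂ] ℋ)) (S : Set ℝ) (D : Set ℋ) (hD : Dense D)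
    (CM : ℝ) (hbd : ∀ s ∈ S, ‖N s‖ ≤ CM)
    (hw : ∀ x ∈ D, ∀ y ∈ D, ContinuousOn (fun s => (inner ℂ x (N s y) : ℂ)) S)
    (x y : ℋ) : ContinuousOn (fun s => (inner ℂ x (N s y) : ℂ)) S := by
  obtain ⟨xs, hxs, hxl⟩ := mem_closure_iff_seq_limit.mp (hD x)
  obtain ⟨ys, hys, hyl⟩ := mem_closure_iff_seq_limit.mp (hD y)
  have CM0 : 0 ≤ CM ∨ S = ∅ := by
    rcases eq_empty_or_nonempty S with h | ⟨s, hs⟩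
    · exact Or.inr h
    · exact Or.inl (le_trans (norm_nonneg _) (hbd s hs))
  rcases CM0 with CM0 | hSe
  swap
  · rw [hSe]; exact continuousOn_empty _
  have hc : Tendsto (fun n => CM * ‖x - xs n‖ * ‖y‖ + CM * ‖xs n‖ * ‖y - ys n‖)
      atTop (nhds (CM * ‖x - x‖ * ‖y‖ + CM * ‖x‖ * ‖y - y‖)) := by
    have h1 : Tendsto (fun n => ‖x - xs n‖) atTop (nhds ‖x - x‖) :=
      ((tendsto_const_nhds.sub hxl).norm)
    have h2 : Tendsto (fun n => ‖xs n‖) atTop (nhds ‖x‖) := hxl.norm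
    have h3 : Tendsto (fun n => ‖y - ys n‖) atTop (nhds ‖y - y‖) :=
      ((tendsto_const_nhds.sub hyl).norm)
    exact (((h1.const_mul CM).mul_const ‖y‖).add ((h2.const_mul CM).mul h3))
  have hc0 : Tendsto (fun n => CM * ‖x - xs n‖ * ‖y‖ + CM * ‖xs n‖ * ‖y - ys n‖)
      atTop (nhds 0) := by simpa using hc
  apply TendstoUniformlyOn.continuousOn
    (F := fun n s => (inner ℂ (xs n) (N s (ys n)) : ℂ)) (p := atTop)
  · rw [Metric.tendstoUniformlyOn_iff]
    intro ε hε
    filter_upwards [(hc0.eventually (gt_mem_nhds hε))] with n hn s hs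
    rw [dist_eq_norm]
    have hdecomp : (inner ℂ x (N s y) : ℂ) - inner ℂ (xs n) (N s (ys n))
        = inner ℂ (x - xs n) (N s y) + inner ℂ (xs n) (N s (y - ys n)) := by
      simp only [map_sub, inner_sub_left, inner_sub_right]; ring
    rw [hdecomp]
    refine lt_of_le_of_lt (le_trans (norm_add_le _ _) ?_) hn
    apply add_le_add
    · calc ‖(inner ℂ (x - xs n) (N s y) : ℂ)‖ ≤ ‖x - xs n‖ * ‖N s y‖ :=
          norm_inner_le_norm _ _
        _ ≤ ‖x - xs n‖ * (CM * ‖y‖) := by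
            apply mul_le_mul_of_nonneg_left _ (norm_nonneg _)
            exact le_trans ((N s).le_opNorm _)
              (mul_le_mul_of_nonneg_right (hbd s hs) (norm_nonneg _))
        _ = CM * ‖x - xs n‖ * ‖y‖ := by ring
    · calc ‖(inner ℂ (xs n) (N s (y - ys n)) : ℂ)‖ ≤ ‖xs n‖ * ‖N s (y - ys n)‖ :=
          norm_inner_le_norm _ _
        _ ≤ ‖xs n‖ * (CM * ‖y - ys n‖) := by
            apply mul_le_mul_of_nonneg_left _ (norm_nonneg _)
            exact le_trans ((N s).le_opNorm _)
              (mul_le_mul_of_nonneg_right (hbd s hs) (norm_nonneg _))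
        _ = CM * ‖xs n‖ * ‖y - ys n‖ := by ring
  · exact (Eventually.of_forall fun n => hw _ (hxs n) _ (hys n)).frequently

lemma derivLeft {N : ℝ → (ℋ →L[ℂ] ℋ)} {u w : ℝ → ℋ} {d : ℋ} {t : ℝ} {S : Set ℝ}
    (hu : HasDerivWithinAt u d S t)
    (hbdd : ∃ B : ℝ, ∀ᶠ s in nhdsWithin t S, ‖N s (w s)‖ ≤ B)
    (hcont : Tendsto (fun s => (inner ℂ d (N s (w s)) : ℂ)) (nhdsWithin t S)
      (nhds (inner ℂ d (N t (w t))))) :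
    HasDerivWithinAt (fun s => (inner ℂ (u s - u t) (N s (w s)) : ℂ))
      (inner ℂ d (N t (w t))) S t := by
  obtain ⟨B, hB⟩ := hbdd
  rw [hasDerivWithinAt_iff_isLittleO]
  have hulo : (fun s => u s - u t - (s - t) • d) =o[nhdsWithin t S] (fun s => s - t) :=
    hasDerivWithinAt_iff_isLittleO.mp hu
  have h1 : (fun s => (inner ℂ (u s - u t - (s - t) • d) (N s (w s)) : ℂ))
      =o[nhdsWithin t S] (fun s => s - t) := by
    refine (IsBigO.trans_isLittleO ?_ hulo)
    apply Asymptotics.IsBigO.of_bound B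
    filter_upwards [hB] with s hs
    calc ‖(inner ℂ (u s - u t - (s - t) • d) (N s (w s)) : ℂ)‖
        ≤ ‖u s - u t - (s - t) • d‖ * ‖N s (w s)‖ := norm_inner_le_norm _ _
      _ ≤ ‖u s - u t - (s - t) • d‖ * B :=
          mul_le_mul_of_nonneg_left hs (norm_nonneg _)
      _ = B * ‖u s - u t - (s - t) • d‖ := mul_comm _ _
  have hε : Tendsto (fun s => (inner ℂ d (N s (w s)) : ℂ) - inner ℂ d (N t (w t)))
      (nhdsWithin t S) (nhds 0) := by
    have := hcont.sub (tendsto_const_nhds (x := (inner ℂ d (N t (w t)) : ℂ)))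
    simpa using this
  have h2 : (fun s => (s - t) • ((inner ℂ d (N s (w s)) : ℂ) - inner ℂ d (N t (w t))))
      =o[nhdsWithin t S] (fun s => s - t) := by
    rw [Asymptotics.isLittleO_iff]
    intro c hc
    filter_upwards [NormedAddCommGroup.tendsto_nhds_zero.mp hε c hc] with s hs
    rw [norm_smul]
    calc ‖(s - t)‖ * ‖(inner ℂ d (N s (w s)) : ℂ) - inner ℂ d (N t (w t))‖
        ≤ ‖s - t‖ * c := mul_le_mul_of_nonneg_left hs.le (norm_nonneg _)
      _ = c * ‖s - t‖ := mul_comm _ _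
  have := h1.add h2
  apply this.congr' _ (Eventually.of_forall fun s => rfl)
  apply Eventually.of_forall
  intro s
  show (inner ℂ (u s - u t - (s - t) • d) (N s (w s)) : ℂ)
      + (s - t) • ((inner ℂ d (N s (w s)) : ℂ) - inner ℂ d (N t (w t)))
    = inner ℂ (u s - u t) (N s (w s)) - (inner ℂ (u t - u t) (N t (w t)) : ℂ)
      - (s - t) • (inner ℂ d (N t (w t)) : ℂ)
  simp only [sub_self, inner_zero_left, inner_sub_left, smul_sub, Complex.real_smul,
    RCLike.real_smul_eq_coe_smul (K := ℂ), inner_smul_left, Complex.conj_ofReal,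
    smul_eq_mul, RCLike.conj_ofReal]
  ring

lemma derivRight {N : ℝ → (ℋ →L[ℂ] ℋ)} {u : ℝ → ℋ} {c d : ℋ} {t : ℝ} {S : Set ℝ}
    (hu : HasDerivWithinAt u d S t)
    (hbdd : ∃ B : ℝ, ∀ᶠ s in nhdsWithin t S, ‖N s‖ ≤ B)
    (hcont : Tendsto (fun s => (inner ℂ c (N s d) : ℂ)) (nhdsWithin t S)
      (nhds (inner ℂ c (N t d)))) :
    HasDerivWithinAt (fun s => (inner ℂ c (N s (u s - u t)) : ℂ))
      (inner ℂ c (N t d)) S t := by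
  obtain ⟨B, hB⟩ := hbdd
  rw [hasDerivWithinAt_iff_isLittleO]
  have hulo : (fun s => u s - u t - (s - t) • d) =o[nhdsWithin t S] (fun s => s - t) :=
    hasDerivWithinAt_iff_isLittleO.mp hu
  have h1 : (fun s => (inner ℂ c (N s (u s - u t - (s - t) • d)) : ℂ))
      =o[nhdsWithin t S] (fun s => s - t) := by
    refine (IsBigO.trans_isLittleO ?_ hulo)
    apply Asymptotics.IsBigO.of_bound (‖c‖ * B)
    filter_upwards [hB] with s hs
    calc ‖(inner ℂ c (N s (u s - u t - (s - t) • d)) : ℂ)‖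
        ≤ ‖c‖ * ‖N s (u s - u t - (s - t) • d)‖ := norm_inner_le_norm _ _
      _ ≤ ‖c‖ * (B * ‖u s - u t - (s - t) • d‖) := by
          apply mul_le_mul_of_nonneg_left _ (norm_nonneg _)
          exact le_trans ((N s).le_opNorm _)
            (mul_le_mul_of_nonneg_right hs (norm_nonneg _))
      _ = ‖c‖ * B * ‖u s - u t - (s - t) • d‖ := by ring
  have hε : Tendsto (fun s => (inner ℂ c (N s d) : ℂ) - inner ℂ c (N t d))
      (nhdsWithin t S) (nhds 0) := by
    have := hcont.sub (tendsto_const_nhds (x := (inner ℂ c (N t d) : ℂ)))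
    simpa using this
  have h2 : (fun s => (s - t) • ((inner ℂ c (N s d) : ℂ) - inner ℂ c (N t d)))
      =o[nhdsWithin t S] (fun s => s - t) := by
    rw [Asymptotics.isLittleO_iff]
    intro e he
    filter_upwards [NormedAddCommGroup.tendsto_nhds_zero.mp hε e he] with s hs
    rw [norm_smul]
    calc ‖(s - t)‖ * ‖(inner ℂ c (N s d) : ℂ) - inner ℂ c (N t d)‖
        ≤ ‖s - t‖ * e := mul_le_mul_of_nonneg_left hs.le (norm_nonneg _)
      _ = e * ‖s - t‖ := mul_comm _ _
  have := h1.add h2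
  apply this.congr' _ (Eventually.of_forall fun s => rfl)
  apply Eventually.of_forall
  intro s
  show (inner ℂ c (N s (u s - u t - (s - t) • d)) : ℂ)
      + (s - t) • ((inner ℂ c (N s d) : ℂ) - inner ℂ c (N t d))
    = inner ℂ c (N s (u s - u t)) - (inner ℂ c (N t (u t - u t)) : ℂ)
      - (s - t) • (inner ℂ c (N t d) : ℂ)
  simp only [sub_self, map_zero, inner_zero_right, map_sub, inner_sub_right, smul_sub,
    Complex.real_smul, RCLike.real_smul_eq_coe_smul (K := ℂ), _root_.map_smul, inner_smul_right,
    smul_eq_mul, RCLike.conj_ofReal]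
  ring

end Helpers


theorem statement8 {ℋ : Type*} [NormedAddCommGroup ℋ] [InnerProductSpace ℂ ℋ]
    [CompleteSpace ℋ]
    (T : ℋ →ₗ.[ℂ] ℋ) (hdense : Dense (T.domain : Set ℋ)) (hsa : IsSelfAdjoint T)
    (u u' : ℝ → ℋ)
    (hud : ∀ t : ℝ, u t ∈ T.domain)
    (hu : ∀ t ∈ Set.Ici (0:ℝ), HasDerivWithinAt u (u' t) (Set.Ici 0) t)
    (hu'c : ContinuousOn u' (Set.Ici 0))
    (hubdd : ∃ C : ℝ, ∀ t : ℝ, 0 ≤ t → ‖u t‖ ≤ C)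
    (hTuc : ContinuousOn (fun t => T ⟨u t, hud t⟩) (Set.Ici 0))
    (r : ℝ → ℋ) (hr : ∀ t : ℝ, r t = u' t + Complex.I • T ⟨u t, hud t⟩)
    (M DM : ℝ → (ℋ →L[ℂ] ℋ))
    (hDMc : ∀ x : ℋ, ContinuousOn (fun t => DM t x) (Set.Ici 0))
    (hDMloc : ∀ b : ℝ, ∃ C : ℝ, ∀ t ∈ Set.Icc (0:ℝ) b, ‖DM t‖ ≤ C)
    (hM : ∀ (x y : T.domain), ∀ t ∈ Set.Ici (0:ℝ),
      HasDerivWithinAt (fun s => (inner ℂ (x : ℋ) (M s (y : ℋ)) : ℂ))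
        ((inner ℂ (x : ℋ) (DM t (y : ℋ)) : ℂ)
          - Complex.I * (inner ℂ (T x) (M t (y : ℋ)) : ℂ)
          + Complex.I * (inner ℂ (x : ℋ) (M t (T y)) : ℂ)) (Set.Ici 0) t)
    (hMbd : ∃ C : ℝ, ∀ t : ℝ, 0 ≤ t → ‖M t‖ ≤ C)
    (hMr : IntegrableOn (fun t => ‖M t (r t)‖) (Set.Ici (0:ℝ)))
    (hMadjr : IntegrableOn
      (fun t => ‖ContinuousLinearMap.adjoint (M t) (r t)‖) (Set.Ici (0:ℝ)))
    (nn : ℕ) (C : Fin nn → ℝ → (ℋ →L[ℂ] ℋ))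
    (hCc : ∀ (j : Fin nn) (x : ℋ), ContinuousOn (fun t => C j t x) (Set.Ici 0))
    (hbil : ∀ (u₁ u₂ : ℋ) (t : ℝ), 0 ≤ t →
      ‖(inner ℂ u₁ (DM t u₂) : ℂ)‖ ≤ ∑ j : Fin nn, ‖C j t u₁‖ * ‖C j t u₂‖)
    (hCint : ∀ j : Fin nn,
      ∫⁻ t in Set.Ici (0:ℝ), ENNReal.ofReal (‖C j t (u t)‖ ^ 2) < ⊤) :
    ∃ L : ℂ, Filter.Tendsto (fun t : ℝ => (inner ℂ (u t) (M t (u t)) : ℂ))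
      Filter.atTop (nhds L) := by
  classical
  obtain ⟨Cu, hCu⟩ := hubdd
  obtain ⟨CM, hCM⟩ := hMbd
  have hCu0 : 0 ≤ Cu := le_trans (norm_nonneg _) (hCu 0 le_rfl)
  have hCM0 : 0 ≤ CM := le_trans (norm_nonneg _) (hCM 0 le_rfl)
  have huc : ContinuousOn u (Ici 0) := fun t ht => (hu t ht).continuousWithinAt
  have hrc : ContinuousOn r (Ici 0) := by
    have h : ContinuousOn (fun t => u' t + Complex.I • T ⟨u t, hud t⟩) (Ici 0) :=
      hu'c.add (hTuc.const_smul Complex.I)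
    exact h.congr fun t _ => hr t
  -- weak continuity of M
  have hMweak : ∀ x y : ℋ, ContinuousOn (fun s => (inner ℂ x (M s y) : ℂ)) (Ici 0) := by
    apply weakContOn_ext M (Ici 0) (T.domain : Set ℋ) hdense CM (fun s hs => hCM s hs)
    intro x hx y hy t ht
    exact (hM ⟨x, hx⟩ ⟨y, hy⟩ t ht).continuousWithinAt
  have hMbE : ∀ t ∈ Ici (0:ℝ), ∃ K : ℝ, ∀ᶠ s in nhdsWithin t (Ici 0), ‖M s‖ ≤ K :=
    fun t _ => ⟨CM, eventually_mem_nhdsWithin.mono fun s hs => hCM s hs⟩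
  have hDMbE : ∀ t ∈ Ici (0:ℝ), ∃ K : ℝ, ∀ᶠ s in nhdsWithin t (Ici 0), ‖DM s‖ ≤ K := by
    intro t ht
    obtain ⟨K, hK⟩ := hDMloc (t + 1)
    refine ⟨K, ?_⟩
    filter_upwards [eventually_mem_nhdsWithin,
      eventually_nhdsWithin_of_eventually_nhds (eventually_lt_nhds (lt_add_one t))]
      with s hs1 hs2
    exact hK s ⟨hs1, hs2.le⟩
  have hfc : ContinuousOn (fun s => (inner ℂ (u s) (M s (u s)) : ℂ)) (Ici 0) :=
    pairContOn M (Ici 0) u u hMweak hMbE huc huc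
  set φ : ℝ → ℂ := fun s => inner ℂ (u s) (DM s (u s)) + inner ℂ (r s) (M s (u s))
    + inner ℂ (u s) (M s (r s)) with hφdef
  have hDMterm : ContinuousOn (fun s => DM s (u s)) (Ici 0) :=
    strongContOn DM (Ici 0) u hDMc hDMbE huc
  have hφc : ContinuousOn φ (Ici 0) :=
    ((huc.inner hDMterm).add (pairContOn M (Ici 0) r u hMweak hMbE hrc huc)).add
      (pairContOn M (Ici 0) u r hMweak hMbE huc hrc)
  -- derivative
  have hderiv : ∀ t ∈ Ici (0:ℝ),
      HasDerivWithinAt (fun s => (inner ℂ (u s) (M s (u s)) : ℂ)) (φ t) (Ici 0) t := by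
    intro t ht
    have hA : HasDerivWithinAt (fun s => (inner ℂ (u s - u t) (M s (u s)) : ℂ))
        (inner ℂ (u' t) (M t (u t))) (Ici 0) t := by
      apply derivLeft (hu t ht)
      · refine ⟨CM * Cu, ?_⟩
        filter_upwards [eventually_mem_nhdsWithin] with s hs
        exact le_trans ((M s).le_opNorm _)
          (mul_le_mul (hCM s hs) (hCu s hs) (norm_nonneg _) hCM0)
      · exact pairContOn M (Ici 0) (fun _ => u' t) u hMweak hMbE continuousOn_const huc t ht
    have hB : HasDerivWithinAt (fun s => (inner ℂ (u t) (M s (u s - u t)) : ℂ))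
        (inner ℂ (u t) (M t (u' t))) (Ici 0) t := by
      apply derivRight (hu t ht)
      · exact hMbE t ht
      · exact hMweak (u t) (u' t) t ht
    have hE := hM ⟨u t, hud t⟩ ⟨u t, hud t⟩ t ht
    have hsum := (hA.add hB).add hE
    have hfun : ∀ s, (inner ℂ (u s) (M s (u s)) : ℂ)
        = ((inner ℂ (u s - u t) (M s (u s)) : ℂ) + inner ℂ (u t) (M s (u s - u t)))
          + inner ℂ (u t) (M s (u t)) := by
      intro s
      simp only [inner_sub_left, map_sub, inner_sub_right]
      ring
    have hres := hsum.congr (fun s _ => hfun s) (hfun t)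
    convert hres using 1
    · rfl
    have hu' : u' t = r t - Complex.I • (T ⟨u t, hud t⟩) := by rw [hr t]; abel
    simp only [hφdef, hu', map_sub, inner_sub_left, inner_sub_right, _root_.map_smul,
      inner_smul_left, inner_smul_right, Complex.conj_I]
    ring
  -- integrability of the dominating function
  have hCjcont : ∀ j, ContinuousOn (fun s => C j s (u s)) (Ici 0) := by
    intro j
    apply strongContOn (C j) (Ici 0) u (hCc j) ?_ huc
    intro t ht
    have hb : ∀ x : ℋ, ∃ Cx : ℝ, ∀ i : (Icc (0:ℝ) (t+1)), ‖C j i x‖ ≤ Cx := by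
      intro x
      obtain ⟨Cx, hCx⟩ := (isCompact_Icc (a := (0:ℝ)) (b := t+1)).exists_bound_of_continuousOn
        ((hCc j x).mono fun s hs => hs.1)
      exact ⟨Cx, fun i => hCx i i.2⟩
    obtain ⟨K, hK⟩ := banach_steinhaus (g := fun i : (Icc (0:ℝ) (t+1)) => C j i) hb
    refine ⟨K, ?_⟩
    filter_upwards [eventually_mem_nhdsWithin,
      eventually_nhdsWithin_of_eventually_nhds (eventually_lt_nhds (lt_add_one t))]
      with s hs1 hs2
    exact hK ⟨s, hs1, hs2.le⟩
  have hgint : IntegrableOn (fun t => (∑ j : Fin nn, ‖C j t (u t)‖ ^ 2)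
      + (Cu * ‖ContinuousLinearMap.adjoint (M t) (r t)‖ + Cu * ‖M t (r t)‖)) (Ici 0) := by
    apply Integrable.add
    · apply integrable_finset_sum
      intro j _
      refine ⟨(((hCjcont j).norm.pow 2)).aestronglyMeasurable measurableSet_Ici, ?_⟩
      rw [HasFiniteIntegral]
      have : ∀ s : ℝ, ‖(‖C j s (u s)‖ ^ 2 : ℝ)‖ₑ
          = ENNReal.ofReal (‖C j s (u s)‖ ^ 2) :=
        fun s => Real.enorm_eq_ofReal (by positivity)
      rw [lintegral_congr fun s => this s]
      exact hCint j
    · exact (hMadjr.const_mul Cu).add (hMr.const_mul Cu)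
  have hφint : IntegrableOn φ (Ici 0) := by
    apply Integrable.mono' hgint (hφc.aestronglyMeasurable measurableSet_Ici)
    rw [ae_restrict_iff' measurableSet_Ici]
    apply ae_of_all
    intro t ht
    have h1 : ‖(inner ℂ (u t) (DM t (u t)) : ℂ)‖ ≤ ∑ j : Fin nn, ‖C j t (u t)‖ ^ 2 := by
      refine le_trans (hbil (u t) (u t) t ht) (le_of_eq ?_)
      exact Finset.sum_congr rfl fun j _ => (sq ‖C j t (u t)‖).symm
    have h2 : ‖(inner ℂ (r t) (M t (u t)) : ℂ)‖
        ≤ Cu * ‖ContinuousLinearMap.adjoint (M t) (r t)‖ := by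
      rw [← ContinuousLinearMap.adjoint_inner_left]
      calc ‖(inner ℂ (ContinuousLinearMap.adjoint (M t) (r t)) (u t) : ℂ)‖
          ≤ ‖ContinuousLinearMap.adjoint (M t) (r t)‖ * ‖u t‖ := norm_inner_le_norm _ _
        _ ≤ ‖ContinuousLinearMap.adjoint (M t) (r t)‖ * Cu :=
            mul_le_mul_of_nonneg_left (hCu t ht) (norm_nonneg _)
        _ = Cu * ‖ContinuousLinearMap.adjoint (M t) (r t)‖ := mul_comm _ _
    have h3 : ‖(inner ℂ (u t) (M t (r t)) : ℂ)‖ ≤ Cu * ‖M t (r t)‖ :=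
      le_trans (norm_inner_le_norm _ _)
        (mul_le_mul_of_nonneg_right (hCu t ht) (norm_nonneg _))
    calc ‖φ t‖ ≤ ‖(inner ℂ (u t) (DM t (u t)) : ℂ) + inner ℂ (r t) (M t (u t))‖
          + ‖(inner ℂ (u t) (M t (r t)) : ℂ)‖ := norm_add_le _ _
      _ ≤ (‖(inner ℂ (u t) (DM t (u t)) : ℂ)‖ + ‖(inner ℂ (r t) (M t (u t)) : ℂ)‖)
          + ‖(inner ℂ (u t) (M t (r t)) : ℂ)‖ :=
          add_le_add_left (norm_add_le _ _) _
      _ ≤ ((∑ j : Fin nn, ‖C j t (u t)‖ ^ 2) + Cu * ‖ContinuousLinearMap.adjoint (M t) (r t)‖)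
          + Cu * ‖M t (r t)‖ := add_le_add (add_le_add h1 h2) h3
      _ = (∑ j : Fin nn, ‖C j t (u t)‖ ^ 2)
          + (Cu * ‖ContinuousLinearMap.adjoint (M t) (r t)‖ + Cu * ‖M t (r t)‖) := by ring
  -- FTC and limit
  have hFTC : ∀ b : ℝ, 0 ≤ b → (inner ℂ (u b) (M b (u b)) : ℂ)
      = inner ℂ (u 0) (M 0 (u 0)) + ∫ s in (0:ℝ)..b, φ s := by
    intro b hb
    have hint : IntervalIntegrable φ volume 0 b := by
      apply IntegrableOn.intervalIntegrable
      apply hφint.mono_set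
      rw [uIcc_of_le hb]
      exact fun s hs => hs.1
    have h := intervalIntegral.integral_eq_sub_of_hasDeriv_right_of_le hb
      (hfc.mono (fun s hs => hs.1)) (fun x hx =>
        (hderiv x hx.1.le).mono fun y hy => le_trans hx.1.le (le_of_lt hy)) hint
    rw [h]; ring
  have hIoi : IntegrableOn φ (Ioi 0) := hφint.mono_set Ioi_subset_Ici_self
  have hlim : Tendsto (fun b : ℝ => ∫ s in (0:ℝ)..b, φ s) atTop
      (nhds (∫ s in Ioi (0:ℝ), φ s)) :=
    intervalIntegral_tendsto_integral_Ioi 0 hIoi tendsto_id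
  refine ⟨inner ℂ (u 0) (M 0 (u 0)) + ∫ s in Ioi (0:ℝ), φ s, ?_⟩
  apply Filter.Tendsto.congr' _ (tendsto_const_nhds.add hlim)
  filter_upwards [eventually_ge_atTop (0:ℝ)] with b hb
  exact (hFTC b hb).symm
end
end

section
/- Let K ⊂ ℝ^{nd} be compact and ε > 0 with K + B̃(0,ε) ⊂ B̃(0,1) ∖ D₀, and let λ > 0 satisfy √2·ε(1+λ) < 2(ε−λ). Let χ ∈ C^∞(ℝ) satisfy χ(s) = 1 for s ≤ −1, χ(s) = 0 for s ≥ (1+λ)², χ'(s) ≤ 0 for all s, and χ'(s) ≤ −1/2 for 0 ≤ s ≤ 1; let χ₁ ∈ C_0^∞(ℝ^{nd}) satisfy 0 ≤ χ₁ ≤ 1, χ₁ = 1 on K, and supp χ₁ ⊂ K + B̃(0,λ). Define M(x,ξ) := χ(ε^{−2}|x − ∇ω̃(ξ)|²) χ₁(∇ω̃(ξ)) and dM(x,ξ) := −(x − ∇ω̃(ξ))·∇_x M(x,ξ). Then: (a) there exists c > 0 such that dM(x,ξ) ≥ c·1_{B(0,ε)}(x − ∇ω̃(ξ))·1_K(∇ω̃(ξ))·|x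 − ∇ω̃(ξ)|² for all (x,ξ) ∈ ℝ^{nd}×ℝ^{nd}; (b) π_x(supp M) ∩ D₀ = ∅, where π_x(supp M) := {x : (x,ξ) ∈ supp M for some ξ}. -/
noncomputable section

open Set
open scoped Pointwise

abbrev Vec (κ : Type*) [Fintype κ] := EuclideanSpace ℝ κ

abbrev Pt (n d : ℕ) := Vec (Fin n × Fin d)

def blk {n d : ℕ} (x : Pt n d) (i : Fin n) : Vec (Fin d) :=
  (WithLp.equiv 2 (Fin d → ℝ)).symm fun a => x (i, a)

def omega1 {d : ℕ} (m : ℝ) (p : Vec (Fin d)) : ℝ := Real.sqrt (‖p‖ ^ 2 + m ^ 2)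

def omegaT {n d : ℕ} (m : ℝ) (ξ : Pt n d) : ℝ := ∑ i : Fin n, omega1 m (blk ξ i)

/-- The gradient `∇ω̃(ξ)`, given by `(∇ω̃(ξ))_{(i,a)} = ξ_{(i,a)}/ω(ξ_i)`. -/
def gradOmegaT {n d : ℕ} (m : ℝ) (ξ : Pt n d) : Pt n d :=
  (WithLp.equiv 2 ((Fin n × Fin d) → ℝ)).symm fun k => ξ k / omega1 m (blk ξ k.1)

def D0 (n d : ℕ) : Set (Pt n d) := {x | ∃ i j : Fin n, i ≠ j ∧ blk x i = blk x j}

def tball (n d : ℕ) (ε : ℝ) : Set (Pt n d) := {x | ∀ i : Fin n, ‖blk x i‖ < ε}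

/-- The symbol `M(x,ξ) = χ(ε⁻²|x−∇ω̃(ξ)|²)·χ₁(∇ω̃(ξ))`. -/
def Msym {n d : ℕ} (m ε : ℝ) (χ : ℝ → ℝ) (χ₁ : Pt n d → ℝ) (x ξ : Pt n d) : ℝ :=
  χ ((ε ^ 2)⁻¹ * ‖x - gradOmegaT m ξ‖ ^ 2) * χ₁ (gradOmegaT m ξ)

/-- `dM(x,ξ) = −(x−∇ω̃(ξ))·∇ₓM(x,ξ)`. -/
def dMsym {n d : ℕ} (m ε : ℝ) (χ : ℝ → ℝ) (χ₁ : Pt n d → ℝ) (x ξ : Pt n d) : ℝ :=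
  -(inner ℝ (x - gradOmegaT m ξ) (gradient (fun x' => Msym m ε χ χ₁ x' ξ) x) : ℝ)

/- ### Auxiliary lemmas -/

lemma blk_add {n d : ℕ} (x y : Pt n d) (i : Fin n) : blk (x + y) i = blk x i + blk y i := rfl

lemma blk_sub {n d : ℕ} (x y : Pt n d) (i : Fin n) : blk (x - y) i = blk x i - blk y i := rfl

def blkL (n d : ℕ) (i : Fin n) : Pt n d →ₗ[ℝ] Vec (Fin d) where
  toFun u := blk u i
  map_add' _ _ := rfl
  map_smul' _ _ := rfl

lemma blk_cont {n d : ℕ} (i : Fin n) : Continuous fun u : Pt n d => blk u i :=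
  (blkL n d i).continuous_of_finiteDimensional

lemma blk_sq_sum {n d : ℕ} (v : Pt n d) (i j : Fin n) (hij : i ≠ j) :
    ‖blk v i‖ ^ 2 + ‖blk v j‖ ^ 2 ≤ ‖v‖ ^ 2 := by
  have hb : ∀ l : Fin n, ‖blk v l‖ ^ 2 = ∑ a : Fin d, v (l, a) ^ 2 := by
    intro l
    rw [EuclideanSpace.norm_eq, Real.sq_sqrt (by positivity)]
    simp [blk, Real.norm_eq_abs, sq_abs]
  have hv : ‖v‖ ^ 2 = ∑ l : Fin n, ∑ a : Fin d, v (l, a) ^ 2 := by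
    rw [EuclideanSpace.norm_eq, Real.sq_sqrt (by positivity)]
    simp [Real.norm_eq_abs, sq_abs, Fintype.sum_prod_type]
  rw [hb, hb, hv]
  have hsub := Finset.sum_le_sum_of_subset_of_nonneg
    (f := fun l : Fin n => ∑ a : Fin d, v (l, a) ^ 2)
    (Finset.subset_univ ({i, j} : Finset (Fin n))) (fun l _ _ => by positivity)
  rwa [Finset.sum_pair hij] at hsub

lemma pair_norm_le {n d : ℕ} (v : Pt n d) (i j : Fin n) (hij : i ≠ j) :
    ‖blk v i‖ + ‖blk v j‖ ≤ Real.sqrt 2 * ‖v‖ := by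
  have h2 : (0:ℝ) ≤ 2 := by norm_num
  have hs := Real.sq_sqrt h2
  have hkey := blk_sq_sum v i j hij
  have hnn : (0:ℝ) ≤ ‖blk v i‖ + ‖blk v j‖ := by positivity
  have hnn2 : (0:ℝ) ≤ Real.sqrt 2 * ‖v‖ := by positivity
  nlinarith [sq_nonneg (‖blk v i‖ - ‖blk v j‖),
    sq_nonneg (Real.sqrt 2 * ‖v‖ - (‖blk v i‖ + ‖blk v j‖)), norm_nonneg v,
    Real.sqrt_nonneg 2, norm_nonneg (blk v i), norm_nonneg (blk v j)]

lemma hasGradientAt_aux {F : Type*} [NormedAddCommGroup F] [InnerProductSpace ℝ F]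
    [CompleteSpace F] (χ : ℝ → ℝ) (hχ : ContDiff ℝ (⊤ : ℕ∞) χ) (ε c : ℝ) (g x : F) :
    HasGradientAt (fun x' => χ ((ε ^ 2)⁻¹ * ‖x' - g‖ ^ 2) * c)
      ((c * deriv χ ((ε ^ 2)⁻¹ * ‖x - g‖ ^ 2) * (ε ^ 2)⁻¹ * 2) • (x - g)) x := by
  have h0 : HasFDerivAt (fun x' : F => x' - g) (ContinuousLinearMap.id ℝ F) x :=
    (hasFDerivAt_id x).sub_const g
  have h1' := h0.inner ℝ h0
  simp only [real_inner_self_eq_norm_sq] at h1'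
  have heq : (InnerProductSpace.toDual ℝ F) ((2:ℝ) • (x - g)) =
      (fderivInnerCLM ℝ (x - g, x - g)).comp
        ((ContinuousLinearMap.id ℝ F).prod (ContinuousLinearMap.id ℝ F)) := by
    ext v
    simp only [InnerProductSpace.toDual_apply_apply, ContinuousLinearMap.coe_comp',
      Function.comp_apply, ContinuousLinearMap.prod_apply, ContinuousLinearMap.coe_id', id_eq,
      fderivInnerCLM_apply]
    rw [real_inner_smul_left, real_inner_comm]
    ring
  have h1 : HasFDerivAt (fun x' : F => ‖x' - g‖ ^ 2)
      ((InnerProductSpace.toDual ℝ F) ((2:ℝ) • (x - g))) x := by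
    rw [heq]; exact h1'
  have h2 : HasFDerivAt (fun x' : F => (ε ^ 2)⁻¹ * ‖x' - g‖ ^ 2)
      ((ε ^ 2)⁻¹ • ((InnerProductSpace.toDual ℝ F) ((2:ℝ) • (x - g)))) x := h1.const_mul _
  set s : ℝ := (ε ^ 2)⁻¹ * ‖x - g‖ ^ 2 with hs
  have h3 : HasDerivAt χ (deriv χ s) s :=
    ((hχ.differentiable (by simp)) s).hasDerivAt
  have h4 := h3.comp_hasFDerivAt x h2
  have h5 := h4.mul_const c
  rw [hasGradientAt_iff_hasFDerivAt]
  have hv : (c * deriv χ s * (ε ^ 2)⁻¹ * 2) • (x - g) =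
      c • (deriv χ s • ((ε ^ 2)⁻¹ • ((2:ℝ) • (x - g)))) := by
    by_cases h : True
    · rw [smul_smul, smul_smul, smul_smul]; try ring_nf
    · exact absurd trivial h
  rw [hv, map_smul, map_smul, map_smul]
  exact h5

set_option maxHeartbeats 1000000 in
theorem statement17 (m : ℝ) (hm : 0 < m) (n d : ℕ) (hd : 1 ≤ d) (hn : 2 ≤ n)
    (K : Set (Pt n d)) (hK : IsCompact K) (ε : ℝ) (hε : 0 < ε)
    (hKD : K + tball n d ε ⊆ tball n d 1 \ D0 n d)
    (lam : ℝ) (hlam : 0 < lam)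
    (hlam2 : Real.sqrt 2 * ε * (1 + lam) < 2 * (ε - lam))
    (χ : ℝ → ℝ) (hχsm : ContDiff ℝ (⊤ : ℕ∞) χ)
    (hχ1 : ∀ s : ℝ, s ≤ -1 → χ s = 1)
    (hχ0 : ∀ s : ℝ, (1 + lam) ^ 2 ≤ s → χ s = 0)
    (hχ' : ∀ s : ℝ, deriv χ s ≤ 0)
    (hχ'' : ∀ s : ℝ, 0 ≤ s → s ≤ 1 → deriv χ s ≤ -(1 / 2))
    (χ₁ : Pt n d → ℝ) (hχ₁sm : ContDiff ℝ (⊤ : ℕ∞) χ₁) (hχ₁cs : HasCompactSupport χ₁)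
    (hχ₁0 : ∀ x, 0 ≤ χ₁ x) (hχ₁1 : ∀ x, χ₁ x ≤ 1)
    (hχ₁K : ∀ x ∈ K, χ₁ x = 1)
    (hχ₁supp : tsupport χ₁ ⊆ K + tball n d lam) :
    (∃ c : ℝ, 0 < c ∧ ∀ x ξ : Pt n d,
      c * (Metric.ball (0 : Pt n d) ε).indicator (fun _ => (1:ℝ)) (x - gradOmegaT m ξ)
          * K.indicator (fun _ => (1:ℝ)) (gradOmegaT m ξ)
          * ‖x - gradOmegaT m ξ‖ ^ 2
        ≤ dMsym m ε χ χ₁ x ξ) ∧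
    {x : Pt n d | ∃ ξ : Pt n d,
        (x, ξ) ∈ tsupport (fun p : Pt n d × Pt n d => Msym m ε χ χ₁ p.1 p.2)}
      ∩ D0 n d = ∅ := by
  have hε2 : (0:ℝ) < (ε ^ 2)⁻¹ := by positivity
  constructor
  · -- Part (a)
    refine ⟨(ε ^ 2)⁻¹, hε2, fun x ξ => ?_⟩
    set g : Pt n d := gradOmegaT m ξ with hg
    set v : Pt n d := x - g with hvdef
    set s : ℝ := (ε ^ 2)⁻¹ * ‖v‖ ^ 2 with hsdef
    have hgrad : gradient (fun x' => Msym m ε χ χ₁ x' ξ) x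
        = (χ₁ g * deriv χ s * (ε ^ 2)⁻¹ * 2) • v :=
      (hasGradientAt_aux χ hχsm ε (χ₁ g) g x).gradient
    have hdm : dMsym m ε χ χ₁ x ξ = -(χ₁ g * deriv χ s * (ε ^ 2)⁻¹ * 2 * ‖v‖ ^ 2) := by
      show -(inner ℝ (x - gradOmegaT m ξ) (gradient (fun x' => Msym m ε χ χ₁ x' ξ) x) : ℝ) = _
      rw [hgrad]
      rw [show x - gradOmegaT m ξ = v from rfl, real_inner_smul_right,
        real_inner_self_eq_norm_sq]
      try ring
    by_cases h1 : v ∈ Metric.ball (0 : Pt n d) ε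
    · by_cases h2 : g ∈ K
      · rw [Set.indicator_of_mem h1, Set.indicator_of_mem h2, hdm, hχ₁K g h2]
        have hvlt : ‖v‖ < ε := by
          simpa [Metric.mem_ball, dist_zero_right] using h1
        have hs0 : 0 ≤ s := by positivity
        have hs1 : s ≤ 1 := by
          have hvv : ‖v‖ ^ 2 ≤ ε ^ 2 := by nlinarith [norm_nonneg v]
          have := mul_le_mul_of_nonneg_left hvv hε2.le
          rw [inv_mul_cancel₀ (by positivity : (ε:ℝ) ^ 2 ≠ 0)] at this
          simpa [hsdef] using this
        have hd := hχ'' s hs0 hs1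
        have hkey : 0 ≤ (ε ^ 2)⁻¹ * ‖v‖ ^ 2 * (-(2 * deriv χ s) - 1) :=
          mul_nonneg (mul_nonneg hε2.le (by positivity)) (by linarith)
        nlinarith [hkey]
      · rw [Set.indicator_of_notMem h2]
        have hnn : 0 ≤ dMsym m ε χ χ₁ x ξ := by
          rw [hdm]
          have h3 : 0 ≤ χ₁ g * (-(deriv χ s)) * (ε ^ 2)⁻¹ * ‖v‖ ^ 2 :=
            mul_nonneg (mul_nonneg (mul_nonneg (hχ₁0 g)
              (neg_nonneg.mpr (hχ' s))) hε2.le) (by positivity)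
          nlinarith [h3]
        calc (ε ^ 2)⁻¹ * Set.indicator (Metric.ball (0 : Pt n d) ε) (fun _ => (1:ℝ)) v * 0
              * ‖v‖ ^ 2 = 0 := by ring
          _ ≤ dMsym m ε χ χ₁ x ξ := hnn
    · rw [Set.indicator_of_notMem h1]
      have hnn : 0 ≤ dMsym m ε χ χ₁ x ξ := by
        rw [hdm]
        have h3 : 0 ≤ χ₁ g * (-(deriv χ s)) * (ε ^ 2)⁻¹ * ‖v‖ ^ 2 :=
          mul_nonneg (mul_nonneg (mul_nonneg (hχ₁0 g)
            (neg_nonneg.mpr (hχ' s))) hε2.le) (by positivity)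
        nlinarith [h3]
      calc (ε ^ 2)⁻¹ * 0 * Set.indicator K (fun _ => (1:ℝ)) g * ‖v‖ ^ 2 = 0 := by ring
        _ ≤ dMsym m ε χ χ₁ x ξ := hnn
  · -- Part (b)
    set B : ℝ := 2 * lam + Real.sqrt 2 * (ε * (1 + lam)) with hB
    set C : Set (Pt n d) :=
      {u | ∀ i j : Fin n, i ≠ j → ‖blk u i‖ + ‖blk u j‖ ≤ B} with hC
    -- C is closed
    have hCclosed : IsClosed C := by
      have hCeq : C = ⋂ (i : Fin n), ⋂ (j : Fin n),
          {u : Pt n d | i ≠ j → ‖blk u i‖ + ‖blk u j‖ ≤ B} := by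
        ext u; simp [hC, Set.mem_iInter]
      rw [hCeq]
      refine isClosed_iInter fun i => isClosed_iInter fun j => ?_
      by_cases hij : i = j
      · have : {u : Pt n d | i ≠ j → ‖blk u i‖ + ‖blk u j‖ ≤ B} = univ := by
          ext u; simp [hij]
        rw [this]; exact isClosed_univ
      · have : {u : Pt n d | i ≠ j → ‖blk u i‖ + ‖blk u j‖ ≤ B}
            = {u : Pt n d | ‖blk u i‖ + ‖blk u j‖ ≤ B} := by
          ext u; simp [hij]
        rw [this]
        exact isClosed_le (((blk_cont i).norm).add ((blk_cont j).norm)) continuous_const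
    have hSclosed : IsClosed (K + C) := hCclosed.add_left_of_isCompact hK
    -- separation of K from D0
    have Ksep : ∀ k ∈ K, ∀ i j : Fin n, i ≠ j → 2 * ε ≤ ‖blk k i - blk k j‖ := by
      intro k hk i j hij
      by_contra hlt
      push_neg at hlt
      set u : Pt n d := (WithLp.equiv 2 ((Fin n × Fin d) → ℝ)).symm
        (fun p => if p.1 = i then (k (j, p.2) - k (i, p.2)) / 2
          else if p.1 = j then (k (i, p.2) - k (j, p.2)) / 2 else 0) with hu
      have hui : blk u i = (2:ℝ)⁻¹ • (blk k j - blk k i) := by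
        ext a
        simp [blk, hu, WithLp.equiv_symm_apply, PiLp.toLp_apply]
        ring
      have huj : blk u j = (2:ℝ)⁻¹ • (blk k i - blk k j) := by
        ext a
        simp [blk, hu, WithLp.equiv_symm_apply, PiLp.toLp_apply, Ne.symm hij, hij]
        ring
      have hul : ∀ l : Fin n, l ≠ i → l ≠ j → blk u l = 0 := by
        intro l hli hlj
        ext a
        simp [blk, hu, WithLp.equiv_symm_apply, PiLp.toLp_apply, hli, hlj]
      have hutb : u ∈ tball n d ε := by
        intro l
        by_cases hli : l = i
        · subst hli
          rw [hui, norm_smul, norm_sub_rev]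
          simp only [norm_inv, Real.norm_ofNat]
          rw [inv_mul_lt_iff₀ (by norm_num : (0:ℝ) < 2)]
          linarith
        · by_cases hlj : l = j
          · subst hlj
            rw [huj, norm_smul]
            simp only [norm_inv, Real.norm_ofNat]
            rw [inv_mul_lt_iff₀ (by norm_num : (0:ℝ) < 2)]
            linarith
          · rw [hul l hli hlj]; simpa using hε
      have hmem : k + u ∈ K + tball n d ε := Set.add_mem_add hk hutb
      have hD : k + u ∈ D0 n d := by
        refine ⟨i, j, hij, ?_⟩
        rw [blk_add, blk_add, hui, huj]
        module
      exact (hKD hmem).2 hD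
    -- support inclusion
    have hsupp : tsupport (fun p : Pt n d × Pt n d => Msym m ε χ χ₁ p.1 p.2)
        ⊆ (K + C) ×ˢ (univ : Set (Pt n d)) := by
      refine closure_minimal ?_ (hSclosed.prod isClosed_univ)
      intro p hp
      have hM : Msym m ε χ χ₁ p.1 p.2 ≠ 0 := hp
      have hM' : χ ((ε ^ 2)⁻¹ * ‖p.1 - gradOmegaT m p.2‖ ^ 2) ≠ 0
          ∧ χ₁ (gradOmegaT m p.2) ≠ 0 := mul_ne_zero_iff.mp hM
      set g : Pt n d := gradOmegaT m p.2 with hgdef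
      have hgmem : g ∈ K + tball n d lam :=
        hχ₁supp (subset_closure (Function.mem_support.mpr hM'.2))
      obtain ⟨k, hk, w, hw, hkw⟩ := hgmem
      have hslt : (ε ^ 2)⁻¹ * ‖p.1 - g‖ ^ 2 < (1 + lam) ^ 2 :=
        lt_of_not_ge fun h => hM'.1 (hχ0 _ h)
      have hvle : ‖p.1 - g‖ ≤ ε * (1 + lam) := by
        have hsq : ‖p.1 - g‖ ^ 2 < (ε * (1 + lam)) ^ 2 := by
          have h1 := mul_lt_mul_of_pos_left hslt (by positivity : (0:ℝ) < ε ^ 2)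
          rw [← mul_assoc, mul_inv_cancel₀ (by positivity : (ε:ℝ) ^ 2 ≠ 0), one_mul] at h1
          rw [mul_pow]; linarith
        have hb : (0:ℝ) ≤ ε * (1 + lam) := by positivity
        exact le_of_lt (lt_of_pow_lt_pow_left₀ 2 hb hsq)
      refine ⟨⟨k, hk, w + (p.1 - g), ?_, ?_⟩, mem_univ _⟩
      · -- w + (p.1 - g) ∈ C
        intro i j hij
        have hai : ‖blk (w + (p.1 - g)) i‖ ≤ ‖blk w i‖ + ‖blk (p.1 - g) i‖ := by
          rw [blk_add]; exact norm_add_le _ _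
        have haj : ‖blk (w + (p.1 - g)) j‖ ≤ ‖blk w j‖ + ‖blk (p.1 - g) j‖ := by
          rw [blk_add]; exact norm_add_le _ _
        have hpair := pair_norm_le (p.1 - g) i j hij
        have hmul : Real.sqrt 2 * ‖p.1 - g‖ ≤ Real.sqrt 2 * (ε * (1 + lam)) :=
          mul_le_mul_of_nonneg_left hvle (Real.sqrt_nonneg 2)
        have hwi := hw i
        have hwj := hw j
        rw [hB]
        linarith
      · -- k + (w + (p.1 - g)) = p.1
        show k + (w + (p.1 - g)) = p.1
        have hkw' : k + w = g := hkw
        rw [← add_assoc, hkw']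
        abel
    -- conclude
    ext x
    simp only [Set.mem_inter_iff, Set.mem_setOf_eq, Set.mem_empty_iff_false, iff_false,
      not_and]
    rintro ⟨ξ, hxξ⟩ hxD
    have hx : x ∈ K + C := by
      have h := hsupp hxξ
      rw [Set.mem_prod] at h
      exact h.1
    obtain ⟨k, hk, u, hu, hku⟩ := hx
    obtain ⟨i, j, hij, hbeq⟩ := hxD
    have h2e := Ksep k hk i j hij
    have heq2 : blk k i + blk u i = blk k j + blk u j := by
      have h := hbeq
      rw [← hku, blk_add, blk_add] at h
      exact h
    have hsub : blk k i - blk k j = blk u j - blk u i := by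
      rw [sub_eq_sub_iff_add_eq_add, add_comm (blk u j) (blk k j)]
      exact heq2
    have hnorm : ‖blk k i - blk k j‖ ≤ ‖blk u i‖ + ‖blk u j‖ := by
      rw [hsub, norm_sub_rev]
      exact norm_sub_le _ _
    have hCu := hu i j hij
    have hassoc : Real.sqrt 2 * (ε * (1 + lam)) = Real.sqrt 2 * ε * (1 + lam) := by ring
    rw [hB, hassoc] at hCu
    linarith
end
end
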